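/- For every integer n ≥ 2, there exists a matrix B over the field ZMod 3, with rows indexed by the even-weight vertices of the n-dimensional hypercube Q_n and columns indexed by the odd-weight vertices of Q_n (each index set having size 2^(n-1)), such that B x y ≠ 0 if and only if x and y are adjacent in Q_n, and the rank of B over ZMod 3 is exactly 2^(n-2). -/

import Mathlib

open Finset

namespace HC

abbrev V (n : ℕ) := Fin n → ZMod 2

def flp {n : ℕ} (i : Fin n) (x : V n) : V n := Function.update x i (x i + 1)

lemma flp_self {n : ℕ} (i : Fin n) (x : V n) : flp i x i = x i + 1 :=
  Function.update_self _ _ _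

lemma flp_ne {n : ℕ} {i j : Fin n} (h : j ≠ i) (x : V n) : flp i x j = x j :=
  Function.update_of_ne h _ _

lemma flp_flp {n : ℕ} (i : Fin n) (x : V n) : flp i (flp i x) = x := by
  funext j
  by_cases h : j = i
  · subst h; rw [flp_self, flp_self]; generalize x j = c; revert c; decide
  · rw [flp_ne h, flp_ne h]

lemma flp_comm {n : ℕ} (i j : Fin n) (x : V n) : flp j (flp i x) = flp i (flp j x) := by
  by_cases hij : i = j
  · subst hij; rfl
  have hij' : j ≠ i := fun h => hij h.symm
  funext l
  by_cases hl : l = i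
  · subst hl; rw [flp_ne hij, flp_self, flp_self, flp_ne hij]
  by_cases hl2 : l = j
  · subst hl2; rw [flp_self, flp_ne hl, flp_ne hl, flp_self]
  · rw [flp_ne hl2, flp_ne hl, flp_ne hl, flp_ne hl2]

lemma flp_injL {n : ℕ} {i j : Fin n} {x : V n} (h : flp i x = flp j x) : i = j := by
  by_contra hij
  have := congrFun h i
  rw [flp_self, flp_ne (by exact hij)] at this
  revert this; generalize x i = c; revert c; decide

lemma flp_ne_self {n : ℕ} (i : Fin n) (x : V n) : flp i x ≠ x := by
  intro h
  have := congrFun h i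
  rw [flp_self] at this
  revert this; generalize x i = c; revert c; decide

lemma sum_flp {n : ℕ} (i : Fin n) (x : V n) : ∑ j, flp i x j = (∑ j, x j) + 1 := by
  unfold flp
  rw [Finset.sum_update_of_mem (mem_univ i),
    Finset.sum_eq_sum_sdiff_singleton_add (mem_univ i) x]
  ring
def cnd (k : ℕ) {n : ℕ} (i j : Fin n) : Prop := j < i ∨ (j = i ∧ i.val < k)

instance (k : ℕ) {n : ℕ} (i j : Fin n) : Decidable (cnd k i j) := by
  unfold cnd; infer_instance

def eps (k : ℕ) {n : ℕ} (i : Fin n) (x : V n) : ZMod 3 :=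
  ∏ j, if cnd k i j ∧ x j = 1 then -1 else 1

lemma eps_sq (k : ℕ) {n : ℕ} (i : Fin n) (x : V n) : eps k i x * eps k i x = 1 := by
  unfold eps
  rw [← Finset.prod_mul_distrib]
  apply Finset.prod_eq_one
  intro j _
  split_ifs <;> decide

lemma eps_ne_zero (k : ℕ) {n : ℕ} (i : Fin n) (x : V n) : eps k i x ≠ 0 := by
  intro h
  have := eps_sq k i x
  rw [h, mul_zero] at this
  exact one_ne_zero this.symm

lemma eps_flp (k : ℕ) {n : ℕ} (i j : Fin n) (x : V n) :
    eps k i (flp j x) = (if cnd k i j then -1 else 1) * eps k i x := by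
  unfold eps
  rw [Finset.prod_eq_prod_diff_singleton_mul (mem_univ j),
    Finset.prod_eq_prod_diff_singleton_mul (mem_univ j)
      (fun l => if cnd k i l ∧ x l = 1 then (-1 : ZMod 3) else 1)]
  have hoff : ∏ l ∈ univ \ {j}, (if cnd k i l ∧ flp j x l = 1 then (-1 : ZMod 3) else 1)
      = ∏ l ∈ univ \ {j}, (if cnd k i l ∧ x l = 1 then (-1 : ZMod 3) else 1) := by
    apply Finset.prod_congr rfl
    intro l hl
    have : l ≠ j := by simpa using (Finset.mem_sdiff.mp hl).2
    rw [show flp j x l = x l from Function.update_of_ne this _ _]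
  rw [hoff, show flp j x j = x j + 1 from Function.update_self _ _ _]
  by_cases hc : cnd k i j
  · simp only [hc, true_and, if_true]
    have hfac : (if x j + 1 = 1 then (-1 : ZMod 3) else 1)
        = -1 * (if x j = 1 then (-1 : ZMod 3) else 1) := by
      generalize x j = c; revert c; decide
    rw [hfac]; ring
  · simp only [hc, false_and, if_false, one_mul]


def M (k : ℕ) {n : ℕ} : Matrix (V n) (V n) (ZMod 3) :=
  fun x y => ∑ i, if y = flp i x then eps k i x else 0

lemma M_flp (k : ℕ) {n : ℕ} (i : Fin n) (x : V n) : M k x (flp i x) = eps k i x := by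
  unfold M
  rw [Finset.sum_eq_single i]
  · simp
  · intro j _ hj
    rw [if_neg]
    intro h
    exact hj (flp_injL h.symm)
  · intro h; exact absurd (mem_univ i) h

lemma M_eq_zero (k : ℕ) {n : ℕ} {x y : V n} (h : ∀ i, y ≠ flp i x) : M k x y = 0 := by
  unfold M
  apply Finset.sum_eq_zero
  intro i _
  rw [if_neg (h i)]

lemma M_ne_zero_iff (k : ℕ) {n : ℕ} (x y : V n) :
    M k x y ≠ 0 ↔ ∃ i, y = flp i x := by
  constructor
  · intro h
    by_contra hc
    push_neg at hc
    exact h (M_eq_zero k hc)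
  · rintro ⟨i, rfl⟩
    rw [M_flp]
    exact eps_ne_zero k i x

lemma exists_flp_iff {n : ℕ} (x y : V n) :
    (∃ i, y = flp i x) ↔ ∃! i, x i ≠ y i := by
  have hz : ∀ a b : ZMod 2, a ≠ b ↔ b = a + 1 := by decide
  constructor
  · rintro ⟨i, rfl⟩
    refine ⟨i, ?_, ?_⟩
    · show x i ≠ flp i x i
      rw [flp_self, hz]
    · intro j hj
      replace hj : x j ≠ flp i x j := hj
      by_contra hji
      rw [flp_ne (by exact hji)] at hj
      exact hj rfl
  · rintro ⟨i, hi, hu⟩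
    refine ⟨i, ?_⟩
    funext j
    by_cases hj : j = i
    · subst hj
      rw [flp_self, ← hz]
      exact hi
    · rw [flp_ne hj]
      by_contra hne
      exact hj (hu j (Ne.symm hne))

lemma cnd_self (k : ℕ) {n : ℕ} (i : Fin n) : cnd k i i ↔ i.val < k := by
  unfold cnd
  simp [lt_irrefl]

lemma cnd_ne (k : ℕ) {n : ℕ} {i j : Fin n} (h : i ≠ j) : cnd k i j ↔ j < i := by
  unfold cnd
  constructor
  · rintro (h1 | ⟨h2, -⟩)
    · exact h1
    · exact absurd h2.symm h
  · exact Or.inl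

lemma key_cancel (k : ℕ) {n : ℕ} {i j : Fin n} (h : i ≠ j) (x : V n) :
    eps k i x * eps k j (flp i x) + eps k j x * eps k i (flp j x) = 0 := by
  rw [eps_flp k i j x, eps_flp k j i x]
  simp only [cnd_ne k h, cnd_ne k (Ne.symm h)]
  rcases lt_trichotomy i j with hlt | heq | hgt
  · rw [if_pos hlt, if_neg (asymm hlt)]; ring
  · exact absurd heq h
  · rw [if_neg (asymm hgt), if_pos hgt]; ring

lemma diag_sum (k : ℕ) {n : ℕ} (hkn : k ≤ n) (h3 : 3 ∣ n + k) :
    ∑ i : Fin n, (if i.val < k then (-1 : ZMod 3) else 1) = 0 := by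
  rw [Finset.sum_ite, Finset.sum_const, Finset.sum_const]
  have hcard : (univ.filter (fun i : Fin n => i.val < k)).card = k := by
    rw [← Fintype.card_subtype]
    have e : {i : Fin n // i.val < k} ≃ Fin k :=
      ⟨fun i => ⟨i.1.1, i.2⟩, fun j => ⟨⟨j.1, lt_of_lt_of_le j.2 hkn⟩, j.2⟩,
        fun i => rfl, fun j => rfl⟩
    rw [Fintype.card_congr e, Fintype.card_fin]
  have hcard2 : (univ.filter (fun i : Fin n => ¬ i.val < k)).card = n - k := by
    have := Finset.card_filter_add_card_filter_not
      (s := (univ : Finset (Fin n))) (fun i : Fin n => i.val < k)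
    rw [hcard, Finset.card_univ, Fintype.card_fin] at this
    omega
  rw [hcard, hcard2]
  have hc : ((n + k : ℕ) : ZMod 3) = 0 := (ZMod.natCast_eq_zero_iff _ _).mpr h3
  have h30 : ((3 : ℕ) : ZMod 3) = 0 := by decide
  have hsub : ((n - k : ℕ) : ZMod 3) = (n : ZMod 3) - k := by
    rw [Nat.cast_sub hkn]
  rw [nsmul_eq_mul, nsmul_eq_mul, hsub]
  push_cast at hc
  linear_combination hc - (k : ZMod 3) * h30

lemma M_mul (k : ℕ) {n : ℕ} (hkn : k ≤ n) (h3 : 3 ∣ n + k) (x z : V n) :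
    ∑ y, M k x y * M k y z = 0 := by
  have step1 : ∑ y, M k x y * M k y z
      = ∑ i, ∑ j, (if z = flp j (flp i x) then eps k i x * eps k j (flp i x) else 0) := by
    have : ∀ y, M k x y * M k y z
        = ∑ i, (if y = flp i x then eps k i x * M k y z else 0) := by
      intro y
      rw [M, Finset.sum_mul]
      apply Finset.sum_congr rfl
      intro i _
      rw [ite_mul, zero_mul]
    rw [Finset.sum_congr rfl (fun y _ => this y), Finset.sum_comm]
    apply Finset.sum_congr rfl
    intro i _
    have hcol : ∀ y, (if y = flp i x then eps k i x * M k y z else 0)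
        = (if flp i x = y then eps k i x * M k y z else 0) := by
      intro y; congr 1; simp [eq_comm]
    rw [Finset.sum_congr rfl (fun y _ => hcol y), Finset.sum_ite_eq univ (flp i x)
      (fun y => eps k i x * M k y z), if_pos (mem_univ _), M, Finset.mul_sum]
    apply Finset.sum_congr rfl
    intro j _
    rw [mul_ite, mul_zero]
  rw [step1]
  by_cases hxz : z = x
  · subst hxz
    have hdiag : ∀ i : Fin n, ∑ j, (if z = flp j (flp i z) then eps k i z * eps k j (flp i z) else 0)
        = (if i.val < k then -1 else 1) := by
      intro i
      rw [Finset.sum_eq_single i]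
      · rw [if_pos (by rw [flp_flp])]
        rw [eps_flp]
        simp only [cnd_self]
        by_cases hik : i.val < k
        · simp only [hik, if_true]
          linear_combination -(eps_sq k i z)
        · simp only [hik, if_false]
          linear_combination eps_sq k i z
      · intro j _ hj
        rw [if_neg]
        intro h
        have h2 : flp j (flp i z) = flp i (flp i z) := by rw [flp_flp, ← h]
        exact hj (flp_injL h2)
      · intro h; exact absurd (mem_univ i) h
    rw [Finset.sum_congr rfl (fun i _ => hdiag i)]
    exact diag_sum k hkn h3
  · set F : Fin n → Fin n → ZMod 3 :=
      fun i j => (if z = flp j (flp i x) then eps k i x * eps k j (flp i x) else 0) with hF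
    have hanti : ∀ i j, F i j + F j i = 0 := by
      intro i j
      by_cases hij : i = j
      · subst hij
        have : F i i = 0 := by
          rw [hF]
          simp only []
          rw [if_neg (by rw [flp_flp]; exact hxz)]
        rw [this, add_zero]
      by_cases hc : z = flp j (flp i x)
      · have hc2 : z = flp i (flp j x) := by rw [← flp_comm]; exact hc
        rw [hF]
        simp only []
        rw [if_pos hc, if_pos hc2]
        exact key_cancel k hij x
      · have hc2 : ¬ z = flp i (flp j x) := by rw [← flp_comm]; exact hc
        rw [hF]
        simp only []
        rw [if_neg hc, if_neg hc2, add_zero]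
    have h2S : (∑ i, ∑ j, F i j) + (∑ i, ∑ j, F i j) = 0 := by
      conv_lhs => rw [show (∑ i, ∑ j, F i j) + (∑ i, ∑ j, F i j)
        = (∑ i, ∑ j, F i j) + (∑ j, ∑ i, F i j) from by rw [Finset.sum_comm]]
      rw [← Finset.sum_add_distrib]
      apply Finset.sum_eq_zero
      intro i _
      rw [← Finset.sum_add_distrib]
      exact Finset.sum_eq_zero (fun j _ => hanti i j)
    have h22 : ((2 : ZMod 3) * 2) = 1 := by decide
    calc ∑ i, ∑ j, F i j = ((2 : ZMod 3) * 2) * ∑ i, ∑ j, F i j := by rw [h22, one_mul]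
      _ = 2 * (((∑ i, ∑ j, F i j) + (∑ i, ∑ j, F i j))) := by ring
      _ = 0 := by rw [h2S, mul_zero]

lemma M_transl (k : ℕ) {n : ℕ} {j₀ : Fin n} (hj : ∀ i : Fin n, ¬ cnd k i j₀) (x y : V n) :
    M k (flp j₀ x) (flp j₀ y) = M k x y := by
  unfold M
  apply Finset.sum_congr rfl
  intro i _
  have hcond : (flp j₀ y = flp i (flp j₀ x)) ↔ (y = flp i x) := by
    constructor
    · intro h
      have h2 := congrArg (flp j₀) h
      rw [flp_flp, flp_comm i j₀, flp_flp] at h2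
      exact h2
    · rintro rfl
      rw [flp_comm]
  have heps : eps k i (flp j₀ x) = eps k i x := by
    rw [eps_flp, if_neg (hj i), one_mul]
  by_cases h : y = flp i x
  · rw [if_pos (hcond.mpr h), if_pos h, heps]
  · rw [if_neg (fun hh => h (hcond.mp hh)), if_neg h]

lemma cnd_last (k m : ℕ) (hk : k ≤ m) (i : Fin (m + 1)) : ¬ cnd k i (Fin.last m) := by
  unfold cnd
  rintro (h1 | ⟨h2, h3⟩)
  · exact absurd (Fin.le_last i) (not_le.mpr h1)
  · rw [← h2] at h3
    simp only [Fin.val_last] at h3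
    omega

def eqSum (m : ℕ) (c : ZMod 2) : {x : V (m + 1) // ∑ j, x j = c} ≃ V m where
  toFun x := fun j => x.1 j.castSucc
  invFun u := ⟨Fin.snoc u (c + ∑ j, u j), by
    rw [Fin.sum_univ_castSucc]
    simp only [Fin.snoc_castSucc, Fin.snoc_last]
    have : ∀ s c : ZMod 2, s + (c + s) = c := by decide
    exact this _ _⟩
  left_inv x := by
    apply Subtype.ext
    have hlast : x.1 (Fin.last m) = c + ∑ j : Fin m, x.1 j.castSucc := by
      have hs := x.2
      rw [Fin.sum_univ_castSucc] at hs
      have h' : ∀ a b c : ZMod 2, a + b = c → b = c + a := by decide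
      exact h' _ _ _ hs
    show (Fin.snoc (fun j : Fin m => x.1 j.castSucc) (c + ∑ j : Fin m, x.1 j.castSucc) : V (m+1)) = x.1
    calc (Fin.snoc (fun j : Fin m => x.1 j.castSucc) (c + ∑ j : Fin m, x.1 j.castSucc) : V (m+1))
        = Fin.snoc (Fin.init x.1) (x.1 (Fin.last m)) := by rw [← hlast]; rfl
      _ = x.1 := Fin.snoc_init_self x.1
  right_inv u := by
    funext j
    show (Fin.snoc u (c + ∑ j, u j) : V (m+1)) (Fin.castSucc j) = u j
    rw [Fin.snoc_castSucc]

lemma rank_reindex_rect {l m o p : Type*} [Fintype m] [Fintype p] [Fintype l] [Fintype o]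
    (e₁ : l ≃ o) (e₂ : m ≃ p) (A : Matrix o p (ZMod 3)) :
    (A.submatrix e₁ e₂).rank = A.rank := by
  have h : A.submatrix (e₁ : l → o) (e₂ : m → p) = Matrix.reindex e₁.symm e₂.symm A := rfl
  rw [h, Matrix.rank, Matrix.rank, Matrix.mulVecLin_reindex, LinearMap.range_comp,
    LinearMap.range_comp, LinearEquiv.range, Submodule.map_top, LinearEquiv.finrank_map_eq]

lemma rank_add_rank_le {α β : Type*} [Fintype α] [Fintype β]
    (A : Matrix α β (ZMod 3)) (B : Matrix β α (ZMod 3)) (h : A * B = 0) :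
    A.rank + B.rank ≤ Fintype.card β := by
  have hr : LinearMap.range B.mulVecLin ≤ LinearMap.ker A.mulVecLin := by
    rintro v ⟨w, rfl⟩
    show A.mulVec (B.mulVec w) = 0
    rw [Matrix.mulVec_mulVec, h, Matrix.zero_mulVec]
  have h1 := LinearMap.finrank_range_add_finrank_ker A.mulVecLin
  have h2 : B.rank ≤ Module.finrank (ZMod 3) (LinearMap.ker A.mulVecLin) :=
    Submodule.finrank_mono hr
  rw [Module.finrank_pi] at h1
  have hA : A.rank = Module.finrank (ZMod 3) (LinearMap.range A.mulVecLin) := rfl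
  omega

end HC



/-- The `n`-dimensional hypercube graph: vertices are elements of `{0,1}^n`,
adjacent iff they differ in exactly one coordinate. -/
def hypercube (n : ℕ) : SimpleGraph (Fin n → ZMod 2) where
  Adj x y := ∃! i, x i ≠ y i
  symm := ⟨by rintro x y ⟨i, hi, hu⟩; exact ⟨i, Ne.symm hi, fun j hj => hu j (Ne.symm hj)⟩⟩
  loopless := ⟨by rintro x ⟨i, hi, -⟩; exact hi rfl⟩

/-- The even-weight vertices of the hypercube `Q_n`. -/
def evenV (n : ℕ) : Type := {x : Fin n → ZMod 2 // ∑ i, x i = 0}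

/-- The odd-weight vertices of the hypercube `Q_n`. -/
def oddV (n : ℕ) : Type := {x : Fin n → ZMod 2 // ∑ i, x i ≠ 0}

instance (n : ℕ) : Fintype (evenV n) := by unfold evenV; infer_instance
instance (n : ℕ) : Fintype (oddV n) := by unfold oddV; infer_instance
instance (n : ℕ) : DecidableEq (evenV n) := by unfold evenV; infer_instance
instance (n : ℕ) : DecidableEq (oddV n) := by unfold oddV; infer_instance

/-- For every `n ≥ 2` there is a matrix `B` over `ZMod 3`, with rows indexed by the
even-weight vertices of `Q_n` and columns by the odd-weight vertices (each index set
of size `2^(n-1)`), nonzero exactly at adjacent pairs, whose rank is `2^(n-2)`. -/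
theorem exists_weighted_adjacency_rank (n : ℕ) (hn : 2 ≤ n) :
    ∃ B : Matrix (evenV n) (oddV n) (ZMod 3),
      (∀ (x : evenV n) (y : oddV n), B x y ≠ 0 ↔ (hypercube n).Adj x.val y.val) ∧
      B.rank = 2 ^ (n - 2) ∧
      Fintype.card (evenV n) = 2 ^ (n - 1) ∧
      Fintype.card (oddV n) = 2 ^ (n - 1) := by
  classical
  obtain ⟨m, rfl⟩ : ∃ m, n = m + 2 := ⟨n - 2, by omega⟩
  set k : ℕ := (2 * (m + 2)) % 3 with hkdef
  have hkm : k ≤ m + 1 := by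
    have h5 : 2 * (m + 2) % 3 ≤ m + 1 := by
      rcases Nat.eq_zero_or_pos m with h | h
      · subst h; norm_num
      · have h6 : 2 * (m + 2) % 3 < 3 := Nat.mod_lt _ (by norm_num)
        omega
    omega
  have hkn : k ≤ m + 2 := by omega
  have h3 : 3 ∣ (m + 2) + k := by omega
  set j₀ : Fin (m + 2) := Fin.last (m + 1) with hj₀
  have hj : ∀ i : Fin (m + 2), ¬ HC.cnd k i j₀ := HC.cnd_last k (m + 1) hkm
  have hzne : ∀ a : ZMod 2, a ≠ 0 ↔ a = 1 := by decide
  -- cardinalities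
  have cardE : Fintype.card (evenV (m + 2)) = 2 ^ (m + 1) := by
    have e0 : evenV (m + 2) ≃ HC.V (m + 1) := HC.eqSum (m + 1) 0
    refine (Fintype.card_congr e0).trans ?_
    simp [Fintype.card_fun, ZMod.card]
  have cardO : Fintype.card (oddV (m + 2)) = 2 ^ (m + 1) := by
    have e0 : oddV (m + 2) ≃ HC.V (m + 1) :=
      (Equiv.subtypeEquivRight (fun x => hzne _)).trans (HC.eqSum (m + 1) 1)
    refine (Fintype.card_congr e0).trans ?_
    simp [Fintype.card_fun, ZMod.card]
  let B : Matrix (evenV (m + 2)) (oddV (m + 2)) (ZMod 3) := fun x y => HC.M k x.val y.val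
  refine ⟨B, ?_, ?_, ?_, ?_⟩
  · intro x y
    rw [show B x y = HC.M k x.val y.val from rfl, HC.M_ne_zero_iff k x.val y.val,
      HC.exists_flp_iff]
    exact Iff.rfl
  · -- rank computation
    let eEO : evenV (m + 2) ≃ oddV (m + 2) :=
      { toFun := fun x => ⟨HC.flp j₀ x.val, by rw [HC.sum_flp, x.2]; decide⟩
        invFun := fun y => ⟨HC.flp j₀ y.val, by rw [HC.sum_flp, (hzne _).mp y.2]; decide⟩
        left_inv := fun x => Subtype.ext (HC.flp_flp _ _)
        right_inv := fun y => Subtype.ext (HC.flp_flp _ _) }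
    let eOE : oddV (m + 2) ≃ evenV (m + 2) := eEO.symm
    let B' : Matrix (oddV (m + 2)) (evenV (m + 2)) (ZMod 3) := fun y x => HC.M k y.val x.val
    have hB' : B' = B.submatrix eOE eEO := by
      ext y x
      show HC.M k y.val x.val = HC.M k (eOE y).val (eEO x).val
      rw [show (eOE y).val = HC.flp j₀ y.val from rfl,
        show (eEO x).val = HC.flp j₀ x.val from rfl, HC.M_transl k hj]
    have hBB' : B * B' = 0 := by
      ext x z
      rw [Matrix.zero_apply]
      have h1 : (∑ y ∈ Finset.univ.filter (fun y : HC.V (m + 2) => ∑ i, y i ≠ 0),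
              HC.M k x.val y * HC.M k y z.val)
          = ∑ y : oddV (m + 2), HC.M k x.val y.val * HC.M k y.val z.val :=
        Finset.sum_subtype (p := fun y : HC.V (m + 2) => ∑ i, y i ≠ 0)
          (Finset.univ.filter (fun y : HC.V (m + 2) => ∑ i, y i ≠ 0))
          (fun y => by simp)
          (fun y => HC.M k x.val y * HC.M k y z.val)
      have h2 : (∑ y ∈ Finset.univ.filter (fun y : HC.V (m + 2) => ∑ i, y i ≠ 0),
              HC.M k x.val y * HC.M k y z.val)
          = ∑ y : HC.V (m + 2), HC.M k x.val y * HC.M k y z.val := by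
        apply Finset.sum_subset (Finset.filter_subset _ _)
        intro y _ hy
        have hyz : ∑ i, y i = 0 := by
          simp only [Finset.mem_filter, Finset.mem_univ, true_and, not_not] at hy
          exact hy
        have hM0 : HC.M k x.val y = 0 := by
          by_contra hne
          obtain ⟨i, rfl⟩ := (HC.M_ne_zero_iff k _ _).mp hne
          rw [HC.sum_flp, x.2] at hyz
          revert hyz; decide
        rw [hM0, zero_mul]
      calc (B * B') x z
          = ∑ y : oddV (m + 2), HC.M k x.val y.val * HC.M k y.val z.val :=
            Matrix.mul_apply
        _ = ∑ y ∈ Finset.univ.filter (fun y : HC.V (m + 2) => ∑ i, y i ≠ 0),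
              HC.M k x.val y * HC.M k y z.val := h1.symm
        _ = ∑ y : HC.V (m + 2), HC.M k x.val y * HC.M k y z.val := h2
        _ = 0 := HC.M_mul k hkn h3 x.val z.val
    have hrank' : B'.rank = B.rank := by
      rw [hB', HC.rank_reindex_rect]
    have hub : B.rank + B'.rank ≤ Fintype.card (oddV (m + 2)) :=
      HC.rank_add_rank_le B B' hBB'
    rw [hrank', cardO] at hub
    -- lower bound via an invertible diagonal submatrix
    let J := {u : HC.V (m + 1) // ∑ j, u j = 1}
    have hcardJ : Fintype.card J = 2 ^ m := by
      have e0 : J ≃ HC.V m := HC.eqSum m 1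
      refine (Fintype.card_congr e0).trans ?_
      simp [Fintype.card_fun, ZMod.card]
    have hsnoc_sum : ∀ (u : HC.V (m + 1)) (a : ZMod 2),
        ∑ i, (Fin.snoc u a : HC.V (m + 2)) i = (∑ j, u j) + a := by
      intro u a
      rw [Fin.sum_univ_castSucc]
      simp
    let row : J → evenV (m + 2) := fun u => ⟨Fin.snoc u.1 1, by rw [hsnoc_sum, u.2]; decide⟩
    let col : J → oddV (m + 2) := fun u => ⟨Fin.snoc u.1 0, by rw [hsnoc_sum, u.2]; decide⟩
    let d : J → ZMod 3 := fun u => HC.eps k j₀ (Fin.snoc u.1 1)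
    have hflip : ∀ u : J, (Fin.snoc u.1 0 : HC.V (m + 2)) = HC.flp j₀ (Fin.snoc u.1 1) := by
      intro u
      funext j
      by_cases hj' : j = Fin.last (m + 1)
      · subst hj'
        rw [show HC.flp j₀ (Fin.snoc u.1 1 : HC.V (m + 2)) (Fin.last (m + 1))
            = (Fin.snoc u.1 1 : HC.V (m + 2)) (Fin.last (m + 1)) + 1 from HC.flp_self _ _]
        simp only [Fin.snoc_last]
        decide
      · obtain ⟨j', rfl⟩ := Fin.exists_castSucc_eq.mpr hj'
        rw [HC.flp_ne (by exact fun h => hj' (by rw [h]))]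
        simp
    have hrowcol : ∀ u : J, HC.M k (row u).val (col u).val = d u := by
      intro u
      show HC.M k (Fin.snoc u.1 1) (Fin.snoc u.1 0) = d u
      rw [hflip u, HC.M_flp]
    have hoffdiag : ∀ u u' : J, u ≠ u' → HC.M k (row u).val (col u').val = 0 := by
      intro u u' huu
      apply HC.M_eq_zero
      intro i heq
      by_cases hi : i = j₀
      · subst hi
        rw [← hflip u] at heq
        apply huu
        apply Subtype.ext; symm
        funext j'
        have := congrFun heq (Fin.castSucc j')
        simpa [col] using this
      · have h1 := congrFun heq (Fin.last (m + 1))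
        rw [HC.flp_ne (by exact fun h => hi (by rw [← h]))] at h1
        simp [row, col] at h1
    let P : Matrix J (evenV (m + 2)) (ZMod 3) := fun u x => if x = row u then 1 else 0
    let Q : Matrix (oddV (m + 2)) J (ZMod 3) := fun y u => if y = col u then 1 else 0
    have hPBQ : P * B * Q = Matrix.diagonal d := by
      ext u u'
      rw [Matrix.mul_apply]
      have h1 : ∀ y, (P * B) u y = B (row u) y := by
        intro y
        rw [Matrix.mul_apply, Finset.sum_eq_single (row u)]
        · show (if row u = row u then (1 : ZMod 3) else 0) * B (row u) y = _
          rw [if_pos rfl, one_mul]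
        · intro x _ hx
          show (if x = row u then (1 : ZMod 3) else 0) * B x y = 0
          rw [if_neg hx, zero_mul]
        · intro h; exact absurd (Finset.mem_univ _) h
      rw [Finset.sum_congr rfl (fun y _ => by rw [h1])]
      rw [Finset.sum_eq_single (col u')]
      · show B (row u) (col u') * (if col u' = col u' then (1 : ZMod 3) else 0)
            = Matrix.diagonal d u u'
        rw [if_pos rfl, mul_one]
        by_cases huu : u = u'
        · subst huu
          rw [Matrix.diagonal_apply_eq]
          exact hrowcol u
        · rw [Matrix.diagonal_apply_ne _ huu]
          exact hoffdiag u u' huu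
      · intro y _ hy
        show B (row u) y * (if y = col u' then (1 : ZMod 3) else 0) = 0
        rw [if_neg hy, mul_zero]
      · intro h; exact absurd (Finset.mem_univ _) h
    have hdnz : ∀ u : J, d u ≠ 0 := fun u => HC.eps_ne_zero _ _ _
    have hunit : IsUnit (Matrix.diagonal d) := by
      rw [Matrix.isUnit_iff_isUnit_det, Matrix.det_diagonal]
      exact (Finset.prod_ne_zero_iff.mpr (fun u _ => hdnz u)).isUnit
    have hlow : 2 ^ m ≤ B.rank := by
      calc 2 ^ m = (Matrix.diagonal d).rank := by
            rw [Matrix.rank_of_isUnit _ hunit, hcardJ]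
        _ = (P * B * Q).rank := by rw [hPBQ]
        _ ≤ (P * B).rank := Matrix.rank_mul_le_left _ _
        _ ≤ B.rank := Matrix.rank_mul_le_right _ _
    have hpow : (2 : ℕ) ^ (m + 1) = 2 * 2 ^ m := by ring
    have : B.rank = 2 ^ m := by omega
    rw [this]
    norm_num
  · rw [cardE]; norm_num
  · rw [cardO]; norm_num
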